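/- arXiv:2402.04435 — 3 statements merged into one kernel-verified Lean document; each statement's English description precedes it below -/
import Mathlib

section
/- Let E be a real normed vector space, let c ≥ 2, and let f_C : E → EuclideanSpace ℝ (Fin c) be a downstream classifier that is Lipschitz with constant L ≥ 0 (for all x₁, x₂ ∈ E, ‖f_C(x₁) − f_C(x₂)‖₂ ≤ L‖x₁ − x₂‖). Let h_a, h_b ∈ E be the embeddings of two watermark graphs, set y_a = f_C(h_a) and y_b = f_C(h_b), let c₁ : Fin c be a coordinate with y_a c₁ ≥ y_a i for all i, and let s_a = y_a c₁ − max_{i ≠ c₁} y_a i be the margin between the logit of the predicted class and that of the second most confident class on y_a. If 2 · L · ‖h_a − h_b‖ < s_a, then y_b c₁ > y_b i for every i ≠ c₁; that is, the predicted class of f_C on h_b is guaranteed to be the same as that on h_a. -/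
lemma eucl_coord_le_norm {c : ℕ} (z : EuclideanSpace ℝ (Fin c)) (i : Fin c) :
    |z i| ≤ ‖z‖ := by
  rw [EuclideanSpace.norm_eq]
  calc |z i| = Real.sqrt (‖z i‖ ^ 2) := by
        rw [Real.sqrt_sq_eq_abs]; simp [abs_abs]
    _ ≤ Real.sqrt (∑ j, ‖z j‖ ^ 2) := by
        apply Real.sqrt_le_sqrt
        exact Finset.single_le_sum (f := fun j => ‖z j‖ ^ 2) (fun j _ => sq_nonneg _) (Finset.mem_univ i)

/-- Lipschitz-classifier margin step (core of Theorem 1): if the `L`-Lipschitz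
classifier `fC` has margin `sa` at its predicted class `c₁` on the embedding
`ha`, and `2 * L * ‖ha - hb‖ < sa`, then `fC` predicts the same class on `hb`. -/
theorem lipschitz_classifier_same_prediction {E : Type*}
    [NormedAddCommGroup E] [NormedSpace ℝ E] {c : ℕ} (hc : 2 ≤ c)
    (fC : E → EuclideanSpace ℝ (Fin c)) (L : ℝ) (hL : 0 ≤ L)
    (hlip : ∀ x₁ x₂ : E, ‖fC x₁ - fC x₂‖ ≤ L * ‖x₁ - x₂‖)
    (ha hb : E)
    (ya yb : EuclideanSpace ℝ (Fin c))
    (hya : ya = fC ha) (hyb : yb = fC hb)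
    (c₁ : Fin c)
    (hmax : ∀ i, ya i ≤ ya c₁)
    (hne : ((Finset.univ : Finset (Fin c)).erase c₁).Nonempty)
    (sa : ℝ)
    (hsa : sa = ya c₁ - ((Finset.univ : Finset (Fin c)).erase c₁).sup' hne ya)
    (hcond : 2 * L * ‖ha - hb‖ < sa) :
    ∀ i, i ≠ c₁ → yb i < yb c₁ := by
  intro i hi
  have hnorm : ‖ya - yb‖ ≤ L * ‖ha - hb‖ := by
    rw [hya, hyb]; exact hlip ha hb
  have hco : ∀ j, |ya j - yb j| ≤ L * ‖ha - hb‖ := fun j => by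
    have := eucl_coord_le_norm (ya - yb) j
    simpa using this.trans hnorm
  have h1 := abs_le.mp (hco i)
  have h2 := abs_le.mp (hco c₁)
  have hsup : ya i ≤ ((Finset.univ : Finset (Fin c)).erase c₁).sup' hne ya :=
    Finset.le_sup' ya (Finset.mem_erase.mpr ⟨hi, Finset.mem_univ i⟩)
  have : ya i ≤ ya c₁ - sa := by rw [hsa]; linarith
  linarith [h1.2, h2.1]
end

section
/- Let K ≥ 1, let E₀, E₁, …, E_{K−1} be real normed vector spaces with E_K = EuclideanSpace ℝ (Fin c) for some c ≥ 2, and for each i ∈ {0, …, K−1} let W_i : E_i →L[ℝ] E_{i+1} be a continuous linear map and φ_i : E_{i+1} → E_{i+1} a 1-Lipschitz activation. Let f_C = φ_{K−1} ∘ W_{K−1} ∘ ⋯ ∘ φ_0 ∘ W_0 : E₀ → EuclideanSpace ℝ (Fin c) be the resulting K-layer MLP classifier. Let h_a, h_b ∈ E₀, set y_a = f_C(h_a) and y_b = f_C(h_b), let c₁ : Fin c satisfy y_a c₁ ≥ y_a i for all i, and let s_a = y_a c₁ − max_{i ≠ c₁} y_a i be the margin between the logit of the predicted class and that of the second most confident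 class on h_a. If ‖h_a − h_b‖ < (1/2) · s_a / ∏_{i=0}^{K−1} ‖W_i‖ (with each operator norm ‖W_i‖ > 0), then y_b c₁ > y_b i for every i ≠ c₁; that is, the predicted class of f_C on h_b is guaranteed to be the same as that on h_a. -/
/-- The `K`-layer network `φ_{K-1} ∘ W_{K-1} ∘ ⋯ ∘ φ_0 ∘ W_0 : E 0 → E K`. -/
def mlpNet (E : ℕ → Type*) [∀ i, NormedAddCommGroup (E i)] [∀ i, NormedSpace ℝ (E i)]
    (W : ∀ i, E i →L[ℝ] E (i + 1)) (φ : ∀ i, E (i + 1) → E (i + 1)) :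
    ∀ K, E 0 → E K
  | 0 => id
  | (K + 1) => φ K ∘ (W K) ∘ mlpNet E W φ K

lemma mlpNet_lipschitz (E : ℕ → Type*) [∀ i, NormedAddCommGroup (E i)]
    [∀ i, NormedSpace ℝ (E i)] (W : ∀ i, E i →L[ℝ] E (i + 1))
    (φ : ∀ i, E (i + 1) → E (i + 1)) (hφ : ∀ i, LipschitzWith 1 (φ i)) :
    ∀ K (x y : E 0),
      ‖mlpNet E W φ K x - mlpNet E W φ K y‖ ≤ (∏ i ∈ Finset.range K, ‖W i‖) * ‖x - y‖ := by
  intro K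
  induction K with
  | zero => intro x y; simp [mlpNet]
  | succ K ih =>
    intro x y
    have h1 : ‖φ K (W K (mlpNet E W φ K x)) - φ K (W K (mlpNet E W φ K y))‖
        ≤ ‖W K (mlpNet E W φ K x) - W K (mlpNet E W φ K y)‖ := by
      have := (hφ K).dist_le_mul (W K (mlpNet E W φ K x)) (W K (mlpNet E W φ K y))
      simpa [dist_eq_norm] using this
    have h2 : ‖W K (mlpNet E W φ K x) - W K (mlpNet E W φ K y)‖
        ≤ ‖W K‖ * ‖mlpNet E W φ K x - mlpNet E W φ K y‖ := by
      simpa [map_sub] using (W K).le_opNorm (mlpNet E W φ K x - mlpNet E W φ K y)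
    have h3 := ih x y
    calc ‖mlpNet E W φ (K + 1) x - mlpNet E W φ (K + 1) y‖
        ≤ ‖W K‖ * ‖mlpNet E W φ K x - mlpNet E W φ K y‖ := le_trans h1 h2
      _ ≤ ‖W K‖ * ((∏ i ∈ Finset.range K, ‖W i‖) * ‖x - y‖) := by
          exact mul_le_mul_of_nonneg_left h3 (norm_nonneg _)
      _ = (∏ i ∈ Finset.range (K + 1), ‖W i‖) * ‖x - y‖ := by
          rw [Finset.prod_range_succ]; ring

lemma euclid_coord_le_norm {c : ℕ} (v : EuclideanSpace ℝ (Fin c)) (i : Fin c) :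
    |v i| ≤ ‖v‖ := by
  rw [EuclideanSpace.norm_eq]
  calc |v i| = Real.sqrt (|v i| ^ 2) := (Real.sqrt_sq (abs_nonneg _)).symm
    _ ≤ _ := Real.sqrt_le_sqrt
        (Finset.single_le_sum (fun j _ => sq_nonneg |v j|) (Finset.mem_univ i))

/-- Theorem 1 of the paper: a `K`-layer MLP classifier (continuous linear layers
`W i`, `1`-Lipschitz activations `φ i`, output space `E K` identified with the
logit space `EuclideanSpace ℝ (Fin c)` via a linear isometry `e`) predicts the
same class on `hb` as on `ha` whenever
`‖ha - hb‖ < (1/2) * sa / ∏_{i<K} ‖W i‖`, where `sa` is the margin between the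
top logit and the second-largest logit on `ha`. -/
theorem mlp_classifier_same_prediction (E : ℕ → Type*)
    [∀ i, NormedAddCommGroup (E i)] [∀ i, NormedSpace ℝ (E i)]
    (K : ℕ) (hK : 1 ≤ K)
    (W : ∀ i, E i →L[ℝ] E (i + 1)) (φ : ∀ i, E (i + 1) → E (i + 1))
    (hφ : ∀ i, LipschitzWith 1 (φ i))
    {c : ℕ} (hc : 2 ≤ c)
    (e : E K ≃ₗᵢ[ℝ] EuclideanSpace ℝ (Fin c))
    (ha hb : E 0)
    (ya yb : EuclideanSpace ℝ (Fin c))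
    (hya : ya = e (mlpNet E W φ K ha)) (hyb : yb = e (mlpNet E W φ K hb))
    (c₁ : Fin c)
    (hmax : ∀ i, ya i ≤ ya c₁)
    (hne : ((Finset.univ : Finset (Fin c)).erase c₁).Nonempty)
    (sa : ℝ)
    (hsa : sa = ya c₁ - ((Finset.univ : Finset (Fin c)).erase c₁).sup' hne ya)
    (hWpos : ∀ i < K, 0 < ‖W i‖)
    (hcond : ‖ha - hb‖ < (1 / 2) * sa / ∏ i ∈ Finset.range K, ‖W i‖) :
    ∀ i, i ≠ c₁ → yb i < yb c₁ := by
  set P : ℝ := ∏ i ∈ Finset.range K, ‖W i‖ with hP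
  have hPpos : 0 < P :=
    Finset.prod_pos (fun i hi => hWpos i (Finset.mem_range.mp hi))
  have hdiff : ‖ya - yb‖ ≤ P * ‖ha - hb‖ := by
    rw [hya, hyb, ← map_sub, e.norm_map]
    exact mlpNet_lipschitz E W φ hφ K ha hb
  have hsmall : ‖ya - yb‖ < sa / 2 := by
    have h := mul_lt_mul_of_pos_left hcond hPpos
    have heq : P * (1 / 2 * sa / P) = sa / 2 := by
      field_simp
    linarith [hdiff]
  intro i hi
  have hsa_i : ya i ≤ ya c₁ - sa := by
    have hmem : i ∈ (Finset.univ : Finset (Fin c)).erase c₁ :=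
      Finset.mem_erase.mpr ⟨hi, Finset.mem_univ i⟩
    have := Finset.le_sup' ya hmem
    linarith [hsa ▸ le_refl sa, this]
  have hcoord : ∀ j, |ya j - yb j| ≤ ‖ya - yb‖ := by
    intro j
    have h := euclid_coord_le_norm (ya - yb) j
    simpa using h
  have h1 : |ya i - yb i| < sa / 2 := lt_of_le_of_lt (hcoord i) hsmall
  have h2 : |ya c₁ - yb c₁| < sa / 2 := lt_of_le_of_lt (hcoord c₁) hsmall
  have a1 := abs_lt.mp h1
  have a2 := abs_lt.mp h2
  linarith [a1.1, a1.2, a2.1, a2.2]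
end

section
/- Let Θ and E be real normed vector spaces (the parameter space and embedding space), let c ≥ 2, and let f_C : E → EuclideanSpace ℝ (Fin c) be Lipschitz with constant L > 0. Let g_a, g_b : Θ → E be the maps sending encoder parameters to the embeddings of the two watermark graphs 𝒢_w^a and 𝒢_w^b. Let θ, θ̂ ∈ Θ and ε ≥ 0 with ‖θ̂ − θ‖ ≤ ε (the finetuned parameters lie within a spherical radius ε of the pretrained parameters). Set y_a = f_C(g_a(θ̂)) and y_b = f_C(g_b(θ̂)), let c₁ : Fin c satisfy y_a c₁ ≥ y_a i for all i, let s_a = y_a c₁ − max_{i ≠ c₁} y_a i, and suppose s_a ≥ s̲_a for some s̲_a > 0. If for every δ ∈ Θ with ‖δ‖ ≤ ε one has ‖g_a(θ + δ) − g_b(θ + δ)‖ < (1/2) · s̲_a / L, then y_b c₁ > y_b i for every i ≠ c₁; that is, the finetuned classifier's predicted class on 𝒢_w^b is guaranteed to be the same as that on 𝒢_w^a. -/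
/-- Corollary 2 of the paper: finetuning-resistant watermark consistency.
If the finetuned parameters `θ̂` stay within radius `ε` of `θ`, the classifier
`fC` is `L`-Lipschitz, the margin `sa` of the prediction on the embedding of
`𝒢_w^a` is at least `s̲ₐ > 0`, and the embeddings of the watermark pair stay
within distance `(1/2) * s̲ₐ / L` uniformly over the `ε`-ball of parameter
updates, then the finetuned classifier predicts the same class on both
watermark graphs. -/
theorem finetuned_classifier_same_prediction {Θ E : Type*}
    [NormedAddCommGroup Θ] [NormedSpace ℝ Θ]
    [NormedAddCommGroup E] [NormedSpace ℝ E]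
    {c : ℕ} (hc : 2 ≤ c)
    (fC : E → EuclideanSpace ℝ (Fin c)) (L : ℝ) (hL : 0 < L)
    (hlip : ∀ x₁ x₂ : E, ‖fC x₁ - fC x₂‖ ≤ L * ‖x₁ - x₂‖)
    (ga gb : Θ → E)
    (θ θhat : Θ) (ε : ℝ) (hε : 0 ≤ ε) (hθ : ‖θhat - θ‖ ≤ ε)
    (ya yb : EuclideanSpace ℝ (Fin c))
    (hya : ya = fC (ga θhat)) (hyb : yb = fC (gb θhat))
    (c₁ : Fin c)
    (hmax : ∀ i, ya i ≤ ya c₁)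
    (hne : ((Finset.univ : Finset (Fin c)).erase c₁).Nonempty)
    (sa : ℝ)
    (hsa : sa = ya c₁ - ((Finset.univ : Finset (Fin c)).erase c₁).sup' hne ya)
    (saLow : ℝ) (hsaLow : 0 < saLow) (hlow : saLow ≤ sa)
    (hcond : ∀ δ : Θ, ‖δ‖ ≤ ε → ‖ga (θ + δ) - gb (θ + δ)‖ < (1 / 2) * saLow / L) :
    ∀ i, i ≠ c₁ → yb i < yb c₁ := by
  intro i hi
  have hθeq : θ + (θhat - θ) = θhat := by abel
  have hemb : ‖ga θhat - gb θhat‖ < (1 / 2) * saLow / L := by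
    have := hcond (θhat - θ) hθ
    rwa [hθeq] at this
  have hd : ‖ya - yb‖ < (1 / 2) * saLow := by
    calc ‖ya - yb‖ ≤ L * ‖ga θhat - gb θhat‖ := by rw [hya, hyb]; exact hlip _ _
      _ < L * ((1 / 2) * saLow / L) := by exact (mul_lt_mul_iff_right₀ hL).2 hemb
      _ = (1 / 2) * saLow := by field_simp
  have hcoord : ∀ j, |ya j - yb j| ≤ ‖ya - yb‖ := by
    intro j
    have := EuclideanSpace.norm_eq (ya - yb)
    have h1 : |(ya - yb) j| ≤ ‖ya - yb‖ := by
      rw [this]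
      have h2 : |(ya - yb) j| = Real.sqrt (((ya - yb) j) ^ 2) := by
        rw [Real.sqrt_sq_eq_abs]
      rw [h2]
      apply Real.sqrt_le_sqrt
      have := Finset.single_le_sum (f := fun k => ((ya - yb) k) ^ 2)
        (fun k _ => sq_nonneg _) (Finset.mem_univ j)
      simpa using this
    simpa using h1
  have hsup : ya i ≤ ((Finset.univ : Finset (Fin c)).erase c₁).sup' hne ya :=
    Finset.le_sup' ya (Finset.mem_erase.2 ⟨hi, Finset.mem_univ i⟩)
  have hyai : ya i ≤ ya c₁ - sa := by rw [hsa]; linarith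
  have h1 := abs_le.1 (hcoord i)
  have h2 := abs_le.1 (hcoord c₁)
  simp only [PiLp.sub_apply] at h1 h2
  linarith
end
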